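/- For all x, y, s, t in the real Okubo algebra 𝒪, the equality ⟨t*s, x⟩ − ⟨t, y⟩ − ⟨s, x*y⟩ + n(y) + n(s)·n(x) + n(t) = 0 holds if and only if y = s*x + t. Equivalently, the point (x,y) of the Okubic affine plane is incident to the line [s,t] if and only if its Veronese image (x,y,x*y;n(y),n(x),1) is β-orthogonal to the vector (t*s,−t,−s;1,n(s),n(t)). -/
import Mathlib


open Matrix Complex

noncomputable section

/-- `3 × 3` complex matrices. -/
abbrev M3 : Type := Matrix (Fin 3) (Fin 3) ℂ

/-- The real Okubo algebra: `3 × 3` traceless Hermitian complex matrices. -/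
def Okubo : Set M3 := {x | x.IsHermitian ∧ x.trace = 0}

/-- The constant `μ = (3 + i√3)/6`. -/
def okMu : ℂ := (3 + (Real.sqrt 3 : ℂ) * Complex.I) / 6

/-- The Okubo product `x*y = μ·(xy) + μ̄·(yx) − (1/3)Tr(xy)·Id`. -/
def omul (x y : M3) : M3 :=
  okMu • (x * y) + (starRingEnd ℂ) okMu • (y * x) - ((1 / 3 : ℂ) * (x * y).trace) • (1 : M3)

/-- The Okubic norm `n(x) = (1/6)Tr(x²)` (real-valued on Hermitian matrices). -/
def onorm (x : M3) : ℝ := (1 / 6) * ((x * x).trace).re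

/-- The polar form `⟨x,y⟩ = n(x+y) − n(x) − n(y)` of the Okubic norm. -/
def opolar (x y : M3) : ℝ := onorm (x + y) - onorm x - onorm y


/-- The bilinear form `β` on `𝒪³ × ℝ³`. -/
def okBeta (v w : (M3 × M3 × M3) × (ℝ × ℝ × ℝ)) : ℝ :=
  opolar v.1.1 w.1.1 + opolar v.1.2.1 w.1.2.1 + opolar v.1.2.2 w.1.2.2 +
    v.2.1 * w.2.1 + v.2.2.1 * w.2.2.1 + v.2.2.2 * w.2.2.2

/-! ### Auxiliary lemmas -/

lemma conj_okMu : (starRingEnd ℂ) okMu = (3 - (Real.sqrt 3 : ℂ) * Complex.I) / 6 := by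
  simp [okMu, map_div₀, Complex.conj_I, Complex.conj_ofReal, Complex.conj_ofNat]
  ring

lemma okMu_add : okMu + (starRingEnd ℂ) okMu = 1 := by
  rw [conj_okMu, okMu]; ring

lemma okMu_mul : okMu * (starRingEnd ℂ) okMu = 1/3 := by
  rw [conj_okMu, okMu]
  have hr : ((Real.sqrt 3 : ℝ) : ℂ) * ((Real.sqrt 3 : ℝ) : ℂ) = 3 := by
    rw [← Complex.ofReal_mul, Real.mul_self_sqrt (by norm_num)]; norm_num
  have hI : Complex.I * Complex.I = -1 := Complex.I_mul_I
  linear_combination (1/36) * hr + (-(((Real.sqrt 3:ℝ):ℂ)*((Real.sqrt 3:ℝ):ℂ))/36) * hI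

lemma opolar_eq (x y : M3) : opolar x y = (1/3) * ((x*y).trace).re := by
  simp only [opolar, onorm]
  have h : (x+y)*(x+y) = x*x + (x*y + (y*x + y*y)) := by noncomm_ring
  rw [h, trace_add, trace_add, trace_add, Matrix.trace_mul_comm y x]
  simp [Complex.add_re]; ring

lemma trace_omul (x y : M3) : (omul x y).trace = 0 := by
  simp only [omul, trace_add, trace_sub, trace_smul, Matrix.trace_one,
    Matrix.trace_mul_comm y x, smul_eq_mul, Fintype.card_fin, Nat.cast_ofNat]
  linear_combination (x*y).trace * okMu_add

lemma isHermitian_omul {x y : M3} (hx : x.IsHermitian) (hy : y.IsHermitian) :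
    (omul x y).IsHermitian := by
  have htr : star ((x*y).trace) = (x*y).trace := by
    rw [← Matrix.trace_conjTranspose, Matrix.conjTranspose_mul, hx.eq, hy.eq,
      Matrix.trace_mul_comm]
  show _ᴴ = _
  simp only [omul, conjTranspose_add, conjTranspose_sub, conjTranspose_smul,
    Matrix.conjTranspose_mul, hx.eq, hy.eq, conjTranspose_one, star_mul', htr]
  rw [Complex.star_def, Complex.conj_conj]
  rw [show (starRingEnd ℂ) ((1:ℂ)/3) = (1:ℂ)/3 by simp [map_div₀, Complex.conj_ofNat]]
  abel

lemma tr_cyc4 (a b : M3) : (b*a*(b*a)).trace = (a*b*(a*b)).trace := by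
  simp only [Matrix.trace, Matrix.diag, Matrix.mul_apply, Fin.sum_univ_three]
  ring

lemma tr_mix (a b : M3) : (a*b*(b*a)).trace = (a*a*(b*b)).trace := by
  simp only [Matrix.trace, Matrix.diag, Matrix.mul_apply, Fin.sum_univ_three]
  ring

lemma tr_mix' (a b : M3) : (b*a*(a*b)).trace = (a*a*(b*b)).trace := by
  simp only [Matrix.trace, Matrix.diag, Matrix.mul_apply, Fin.sum_univ_three]
  ring

/-- The fundamental `3×3` trace identity for traceless matrices. -/
lemma trace_identity (A B : M3) (hA : A.trace = 0) (hB : B.trace = 0) :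
    4 * (A*A*(B*B)).trace + 2 * (A*B*(A*B)).trace =
      (A*A).trace * (B*B).trace + 2 * ((A*B).trace) * ((A*B).trace) := by
  have hA2 : A 2 2 = -(A 0 0 + A 1 1) := by
    have := hA
    simp only [Matrix.trace, Matrix.diag, Fin.sum_univ_three] at this
    linear_combination this
  have hB2 : B 2 2 = -(B 0 0 + B 1 1) := by
    have := hB
    simp only [Matrix.trace, Matrix.diag, Fin.sum_univ_three] at this
    linear_combination this
  simp only [Matrix.trace, Matrix.diag, Matrix.mul_apply, Fin.sum_univ_three]
  rw [hA2, hB2]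
  ring

lemma trace_omul_sq (s x : M3) (hs : s.trace = 0) (hx : x.trace = 0) :
    (omul s x * omul s x).trace = (1/6) * ((s*s).trace * ((x*x).trace)) := by
  simp only [omul, Matrix.add_mul, Matrix.mul_add, Matrix.sub_mul, Matrix.mul_sub,
    smul_mul_assoc, mul_smul_comm, Matrix.one_mul, Matrix.mul_one, smul_smul,
    trace_add, trace_sub, trace_smul, Matrix.trace_one, smul_eq_mul,
    Fintype.card_fin, Nat.cast_ofNat]
  rw [tr_mix' s x, tr_mix s x, tr_cyc4 s x, Matrix.trace_mul_comm x s]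
  linear_combination (1/6) * trace_identity s x hs hx +
    ((okMu + (starRingEnd ℂ) okMu + 1) * (s*x*(s*x)).trace -
      (2/3) * ((s*x).trace)^2) * okMu_add +
    (2 * (s*s*(x*x)).trace - 2 * (s*x*(s*x)).trace) * okMu_mul

lemma herm_trace_mul_real {a b : M3} (ha : a.IsHermitian) (hb : b.IsHermitian) :
    ((a*b).trace) = ((((a*b).trace).re : ℝ) : ℂ) := by
  have h : (starRingEnd ℂ) ((a*b).trace) = (a*b).trace := by
    rw [show (starRingEnd ℂ) ((a*b).trace) = star ((a*b).trace) from rfl,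
      ← Matrix.trace_conjTranspose, Matrix.conjTranspose_mul, ha.eq, hb.eq,
      Matrix.trace_mul_comm]
  exact (Complex.conj_eq_iff_re.mp h).symm

/-- Composition: `n(s*x) = n(s)·n(x)` for traceless Hermitian `s, x`. -/
lemma onorm_omul {s x : M3} (hs : s.IsHermitian) (hs0 : s.trace = 0)
    (hx : x.IsHermitian) (hx0 : x.trace = 0) :
    onorm (omul s x) = onorm s * onorm x := by
  have h1 := herm_trace_mul_real hs hs
  have h2 := herm_trace_mul_real hx hx
  simp only [onorm]
  rw [trace_omul_sq s x hs0 hx0, h1, h2]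
  rw [show ((1/6:ℂ) * (((((s*s).trace).re : ℝ):ℂ) * ((((x*x).trace).re : ℝ):ℂ)))
      = (((1/6) * (((s*s).trace).re * ((x*x).trace).re) : ℝ) : ℂ) by push_cast; ring,
    Complex.ofReal_re]
  simp only [Complex.ofReal_re]
  ring

lemma onorm_eq_zero_iff {z : M3} (hz : z.IsHermitian) : onorm z = 0 ↔ z = 0 := by
  have t1 : (z*z).trace = ∑ i, ∑ j, z i j * star (z i j) := by
    simp only [Matrix.trace, Matrix.diag, Matrix.mul_apply]
    refine Finset.sum_congr rfl fun i _ => Finset.sum_congr rfl fun j _ => ?_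
    rw [hz.apply j i]
  have key : ((z*z).trace).re = ∑ i, ∑ j, Complex.normSq (z i j) := by
    rw [t1]
    rw [Complex.re_sum]
    refine Finset.sum_congr rfl fun i _ => ?_
    rw [Complex.re_sum]
    refine Finset.sum_congr rfl fun j _ => ?_
    rw [show z i j * star (z i j) = ((Complex.normSq (z i j) : ℝ) : ℂ) from
      Complex.mul_conj _]
    exact Complex.ofReal_re _
  constructor
  · intro h
    have hsum : ∑ i, ∑ j, Complex.normSq (z i j) = 0 := by
      rw [onorm, key] at h; linarith
    have h1 := (Finset.sum_eq_zero_iff_of_nonneg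
      (fun i _ => Finset.sum_nonneg fun j _ => Complex.normSq_nonneg _)).mp hsum
    ext i j
    have h2 := (Finset.sum_eq_zero_iff_of_nonneg
      (fun j _ => Complex.normSq_nonneg _)).mp (h1 i (Finset.mem_univ i)) j (Finset.mem_univ j)
    simpa using Complex.normSq_eq_zero.mp h2
  · intro h; subst h; simp [onorm]

lemma assoc1 (t s x : M3) (hx : x.trace = 0) (ht : t.trace = 0) :
    ((omul t s) * x).trace = ((omul s x) * t).trace := by
  simp only [omul, Matrix.add_mul, Matrix.sub_mul, smul_mul_assoc, Matrix.one_mul,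
    trace_add, trace_sub, trace_smul, smul_eq_mul]
  rw [hx, ht, Matrix.trace_mul_cycle s x t, Matrix.trace_mul_cycle x s t,
    Matrix.trace_mul_cycle t x s]
  ring

lemma assoc2 (s x y : M3) (hs : s.trace = 0) (hy : y.trace = 0) :
    (s * omul x y).trace = ((omul s x) * y).trace := by
  simp only [omul, Matrix.mul_add, Matrix.mul_sub, Matrix.add_mul, Matrix.sub_mul,
    mul_smul_comm, smul_mul_assoc, Matrix.mul_one, Matrix.one_mul,
    trace_add, trace_sub, trace_smul, smul_eq_mul]
  rw [hs, hy, ← mul_assoc s x y, ← mul_assoc s y x, Matrix.trace_mul_cycle s y x]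
  ring

lemma opolar_comm (a b : M3) : opolar a b = opolar b a := by
  rw [opolar_eq, opolar_eq, Matrix.trace_mul_comm]

lemma opolar_add_right (a b c : M3) : opolar a (b + c) = opolar a b + opolar a c := by
  simp only [opolar_eq, Matrix.mul_add, trace_add, Complex.add_re]; ring

lemma opolar_neg_right (a b : M3) : opolar a (-b) = - opolar a b := by
  simp only [opolar_eq, Matrix.mul_neg, trace_neg, Complex.neg_re]; ring

lemma onorm_neg (b : M3) : onorm (-b) = onorm b := by
  simp [onorm]

lemma onorm_add (a b : M3) : onorm (a + b) = onorm a + onorm b + opolar a b := by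
  simp only [opolar]; ring

lemma onorm_sub (a b : M3) : onorm (a - b) = onorm a + onorm b - opolar a b := by
  rw [sub_eq_add_neg, onorm_add, onorm_neg, opolar_neg_right]; ring

/-- For all `x, y, s, t ∈ 𝒪`,
`⟨t*s, x⟩ − ⟨t, y⟩ − ⟨s, x*y⟩ + n(y) + n(s)·n(x) + n(t) = 0` iff `y = s*x + t`;
equivalently the Veronese image of `(x,y)` is β-orthogonal to
`(t*s, −t, −s; 1, n(s), n(t))` iff `(x,y)` is incident to the line `[s,t]`. -/
theorem okubo_paper_stmt15 :
    ∀ x ∈ Okubo, ∀ y ∈ Okubo, ∀ s ∈ Okubo, ∀ t ∈ Okubo,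
      ((opolar (omul t s) x - opolar t y - opolar s (omul x y) +
          onorm y + onorm s * onorm x + onorm t = 0) ↔ y = omul s x + t) ∧
      ((okBeta ((x, y, omul x y), (onorm y, onorm x, 1))
          ((omul t s, -t, -s), (1, onorm s, onorm t)) = 0) ↔ y = omul s x + t) := by
  rintro x ⟨hxH, hx0⟩ y ⟨hyH, hy0⟩ s ⟨hsH, hs0⟩ t ⟨htH, ht0⟩
  -- The main energy identity: E = n(y - (s*x + t))
  have e1 : opolar (omul t s) x = opolar (omul s x) t := by
    rw [opolar_eq, opolar_eq, assoc1 t s x hx0 ht0]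
  have e2 : opolar s (omul x y) = opolar (omul s x) y := by
    rw [opolar_eq, opolar_eq, assoc2 s x y hs0 hy0]
  have hE : opolar (omul t s) x - opolar t y - opolar s (omul x y) +
      onorm y + onorm s * onorm x + onorm t = onorm (y - (omul s x + t)) := by
    rw [onorm_sub, onorm_add, opolar_add_right, onorm_omul hsH hs0 hxH hx0,
      e1, e2, opolar_comm t y, opolar_comm y (omul s x)]
    ring
  have hzH : (y - (omul s x + t)).IsHermitian :=
    hyH.sub ((isHermitian_omul hsH hxH).add htH)
  have main : (opolar (omul t s) x - opolar t y - opolar s (omul x y) +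
      onorm y + onorm s * onorm x + onorm t = 0) ↔ y = omul s x + t := by
    rw [hE, onorm_eq_zero_iff hzH, sub_eq_zero]
  refine ⟨main, ?_⟩
  have hbeta : okBeta ((x, y, omul x y), (onorm y, onorm x, 1))
      ((omul t s, -t, -s), (1, onorm s, onorm t)) =
      opolar (omul t s) x - opolar t y - opolar s (omul x y) +
        onorm y + onorm s * onorm x + onorm t := by
    simp only [okBeta, opolar_neg_right]
    rw [opolar_comm x (omul t s), opolar_comm y t, opolar_comm (omul x y) s]
    ring
  rw [hbeta]
  exact main

end
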